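/- Let D̂ : Φ → ℝ be continuously differentiable and D_ψ : Φ×Φ → [0,∞) be such that ∇₁D_ψ is continuous and ∇₁D_ψ(φ,φ) = 0 for all φ. Suppose (φ^k) satisfies the proximal recurrence φ^{k+1} ∈ argmin_φ [D̂(φ) + D_ψ(φ,φ^k)] with each φ^{k+1} in the interior of Φ, and suppose φ^{k+1} − φ^k → 0. Then the limit φ^∞ of every convergent subsequence of (φ^k) satisfies ∇D̂(φ^∞) = 0. -/

import Mathlib

open Filter

/-- If `D̂` is C¹, the first-variable gradient `G = ∇₁D_ψ` of the proximal term is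
continuous and vanishes on the diagonal, the proximal sequence satisfies the
first-order optimality condition and `φ^{k+1} − φ^k → 0`, then the limit of every
convergent subsequence of `(φ^k)` is a stationary point of `D̂`. -/
theorem limit_of_convergent_subsequence_is_stationary
    {d : ℕ}
    (Dhat : EuclideanSpace ℝ (Fin d) → ℝ)
    (hD : ContDiff ℝ 1 Dhat)
    (G : EuclideanSpace ℝ (Fin d) → EuclideanSpace ℝ (Fin d) → EuclideanSpace ℝ (Fin d))
    (hGcont : Continuous fun p : EuclideanSpace ℝ (Fin d) × EuclideanSpace ℝ (Fin d) => G p.1 p.2)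
    (hGdiag : ∀ φ, G φ φ = 0)
    (φ : ℕ → EuclideanSpace ℝ (Fin d))
    (hopt : ∀ k, gradient Dhat (φ (k+1)) + G (φ (k+1)) (φ k) = 0)
    (hdiff : Tendsto (fun k => φ (k+1) - φ k) atTop (nhds 0)) :
    ∀ (N : ℕ → ℕ), StrictMono N → ∀ φinf : EuclideanSpace ℝ (Fin d),
      Tendsto (fun k => φ (N k)) atTop (nhds φinf) →
      gradient Dhat φinf = 0 := by
  intro N hN φinf hconv
  -- difference along subsequence tends to 0
  have hdiffN : Tendsto (fun k => φ (N k + 1) - φ (N k)) atTop (nhds 0) :=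
    hdiff.comp hN.tendsto_atTop
  -- φ (N k + 1) → φinf
  have hconv1 : Tendsto (fun k => φ (N k + 1)) atTop (nhds φinf) := by
    have := hdiffN.add hconv
    simpa using this
  -- gradient is continuous
  have hgradcont : Continuous (gradient Dhat) := by
    have hf : Continuous (fderiv ℝ Dhat) := hD.continuous_fderiv one_ne_zero
    exact ((InnerProductSpace.toDual ℝ (EuclideanSpace ℝ (Fin d))).symm.continuous).comp hf
  -- gradient Dhat (φ (N k + 1)) → gradient Dhat φinf
  have h1 : Tendsto (fun k => gradient Dhat (φ (N k + 1))) atTop (nhds (gradient Dhat φinf)) :=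
    (hgradcont.tendsto _).comp hconv1
  -- also gradient Dhat (φ (N k + 1)) = - G (φ (N k + 1)) (φ (N k)) → - G φinf φinf = 0
  have h2 : Tendsto (fun k => gradient Dhat (φ (N k + 1))) atTop (nhds 0) := by
    have hGt : Tendsto (fun k => G (φ (N k + 1)) (φ (N k))) atTop (nhds (G φinf φinf)) :=
      (hGcont.tendsto (φinf, φinf)).comp (hconv1.prodMk_nhds hconv)
    have : Tendsto (fun k => -G (φ (N k + 1)) (φ (N k))) atTop (nhds (-(G φinf φinf))) :=
      hGt.neg
    rw [hGdiag, neg_zero] at this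
    convert this using 2 with k
    have := hopt (N k)
    linear_combination (norm := module) this
  exact tendsto_nhds_unique h1 h2
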